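/- If the semigroup I∞↗(ℕ) is endowed with a locally compact Hausdorff topology making its multiplication jointly continuous (so that it is a topological semigroup), then the set of idempotents E(I∞↗(ℕ)), with the subspace topology, is a discrete space. -/

import Mathlib

open Set

/-- Cofinite monotone partial bijections of `ℕ`. -/
def IsCMPB (e : PartialEquiv ℕ ℕ) : Prop :=
  e.sourceᶜ.Finite ∧ e.targetᶜ.Finite ∧
    ∀ ⦃m n : ℕ⦄, m ∈ e.source → n ∈ e.source → m < n → e m < e n

lemma IsCMPB.symm {e : PartialEquiv ℕ ℕ} (he : IsCMPB e) : IsCMPB e.symm := by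
  obtain ⟨h1, h2, h3⟩ := he
  refine ⟨by simpa using h2, by simpa using h1, ?_⟩
  intro m n hm hn hmn
  have hm' : e.symm m ∈ e.source := e.map_target (by simpa using hm)
  have hn' : e.symm n ∈ e.source := e.map_target (by simpa using hn)
  have hEm : e (e.symm m) = m := e.right_inv hm
  have hEn : e (e.symm n) = n := e.right_inv hn
  rcases lt_trichotomy (e.symm m) (e.symm n) with h | h | h
  · exact h
  · exfalso
    have : m = n := by rw [← hEm, ← hEn, h]
    omega
  · exfalso
    have := h3 hn' hm' h
    rw [hEm, hEn] at this
    omega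

private lemma trans_source_compl_finite {e f : PartialEquiv ℕ ℕ}
    (he : e.sourceᶜ.Finite) (hf : f.sourceᶜ.Finite) : ((e.trans f).source)ᶜ.Finite := by
  rw [PartialEquiv.trans_source]
  have hT : (e.source ∩ e ⁻¹' f.sourceᶜ).Finite := by
    apply Set.Finite.of_finite_image ?_ (e.injOn.mono inter_subset_left)
    apply hf.subset
    rintro _ ⟨x, ⟨_, hx2⟩, rfl⟩
    exact hx2
  apply (he.union hT).subset
  intro x hx
  simp only [mem_compl_iff, mem_inter_iff, not_and_or] at hx
  by_cases h : x ∈ e.source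
  · rcases hx with h' | h'
    · exact absurd h h'
    · exact Or.inr ⟨h, h'⟩
  · exact Or.inl h

lemma IsCMPB.trans {e f : PartialEquiv ℕ ℕ} (he : IsCMPB e) (hf : IsCMPB f) :
    IsCMPB (e.trans f) := by
  refine ⟨trans_source_compl_finite he.1 hf.1, ?_, ?_⟩
  · have h : (((e.trans f).symm).source)ᶜ.Finite := by
      rw [PartialEquiv.trans_symm_eq_symm_trans_symm]
      exact trans_source_compl_finite (by simpa using hf.2.1) (by simpa using he.2.1)
    simpa using h
  · intro m n hm hn hmn
    rw [PartialEquiv.trans_source] at hm hn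
    show f (e m) < f (e n)
    exact hf.2.2 hm.2 hn.2 (he.2.2 hm.1 hn.1 hmn)

lemma isCMPB_congr {e e' : PartialEquiv ℕ ℕ} (h : e ≈ e') : IsCMPB e ↔ IsCMPB e' := by
  constructor <;> intro ⟨h1, h2, h3⟩
  · refine ⟨(PartialEquiv.EqOnSource.source_eq h) ▸ h1, (PartialEquiv.EqOnSource.target_eq h) ▸ h2, ?_⟩
    intro m n hm hn hmn
    rw [← (PartialEquiv.EqOnSource.source_eq h)] at hm hn
    rw [← (PartialEquiv.EqOnSource.eqOn h) hm, ← (PartialEquiv.EqOnSource.eqOn h) hn]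
    exact h3 hm hn hmn
  · refine ⟨(PartialEquiv.EqOnSource.source_eq h) ▸ h1, (PartialEquiv.EqOnSource.target_eq h) ▸ h2, ?_⟩
    intro m n hm hn hmn
    rw [(PartialEquiv.EqOnSource.eqOn h) hm, (PartialEquiv.EqOnSource.eqOn h) hn]
    exact h3 ((PartialEquiv.EqOnSource.source_eq h) ▸ hm) ((PartialEquiv.EqOnSource.source_eq h) ▸ hn) hmn

/-- The type of partial bijections of `ℕ` up to equality on the source. -/
abbrev PEQ : Type := Quotient (PartialEquiv.eqOnSourceSetoid (α := ℕ) (β := ℕ))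

instance : Mul PEQ :=
  ⟨Quotient.map₂ PartialEquiv.trans fun _ _ h _ _ h' => PartialEquiv.EqOnSource.trans' h h'⟩

lemma PEQ.mk_mul (e f : PartialEquiv ℕ ℕ) : (⟦e⟧ * ⟦f⟧ : PEQ) = ⟦e.trans f⟧ := rfl

instance : Semigroup PEQ where
  mul_assoc a b c := by
    induction a using Quotient.inductionOn with | h a =>
    induction b using Quotient.inductionOn with | h b =>
    induction c using Quotient.inductionOn with | h c =>
    simp only [PEQ.mk_mul, PartialEquiv.trans_assoc]

/-- The property of being a cofinite monotone partial bijection, on `PEQ`. -/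
def PEQ.IsGood : PEQ → Prop :=
  Quotient.lift IsCMPB fun _ _ h => propext (isCMPB_congr h)

lemma PEQ.IsGood.mul {a b : PEQ} (ha : a.IsGood) (hb : b.IsGood) : (a * b).IsGood := by
  induction a using Quotient.inductionOn with | h a =>
  induction b using Quotient.inductionOn with | h b =>
  exact IsCMPB.trans ha hb

/-- The semigroup `I∞↗(ℕ)` of cofinite monotone partial bijections of `ℕ`
(partial bijections being identified when they have the same source and coincide there). -/
def Imon : Type := {q : PEQ // q.IsGood}

instance : Mul Imon := ⟨fun a b => ⟨a.1 * b.1, a.2.mul b.2⟩⟩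

instance : Semigroup Imon where
  mul_assoc a b c := Subtype.ext (mul_assoc a.1 b.1 c.1)

/-- The underlying symmetrization (inverse partial bijection), on `PEQ`. -/
def PEQ.symm : PEQ → PEQ := Quotient.map PartialEquiv.symm fun _ _ h => PartialEquiv.EqOnSource.symm' h

lemma PEQ.IsGood.symm {a : PEQ} (ha : a.IsGood) : a.symm.IsGood := by
  induction a using Quotient.inductionOn with | h a =>
  exact IsCMPB.symm ha

/-- The inverse in the inverse semigroup `I∞↗(ℕ)`. -/
instance : Inv Imon := ⟨fun a => ⟨a.1.symm, a.2.symm⟩⟩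

/-- The source (domain) of an element of `PEQ`. -/
def PEQ.source : PEQ → Set ℕ :=
  Quotient.lift (fun e => e.source) fun _ _ h => (PartialEquiv.EqOnSource.source_eq h)

/-- The target (range) of an element of `PEQ`. -/
def PEQ.target : PEQ → Set ℕ :=
  Quotient.lift (fun e => e.target) fun _ _ h => (PartialEquiv.EqOnSource.target_eq h)

/-- The source (domain) of a cofinite monotone partial bijection of `ℕ`. -/
def Imon.source (a : Imon) : Set ℕ := a.1.source

/-- The target (range) of a cofinite monotone partial bijection of `ℕ`. -/
def Imon.target (a : Imon) : Set ℕ := a.1.target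

/-- The graph of an element of `PEQ`: pairs `(x, y)` with `x` in the source mapped to `y`. -/
def PEQ.graph : PEQ → Set (ℕ × ℕ) :=
  Quotient.lift (fun e => {p : ℕ × ℕ | p.1 ∈ e.source ∧ e p.1 = p.2}) fun e e' h => by
    ext p
    simp only [mem_setOf_eq]
    constructor
    · rintro ⟨h1, h2⟩
      exact ⟨(PartialEquiv.EqOnSource.source_eq h) ▸ h1, by rw [← (PartialEquiv.EqOnSource.eqOn h) h1]; exact h2⟩
    · rintro ⟨h1, h2⟩
      refine ⟨(PartialEquiv.EqOnSource.source_eq h) ▸ h1, ?_⟩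
      rw [(PartialEquiv.EqOnSource.eqOn h) ((PartialEquiv.EqOnSource.source_eq h) ▸ h1 : p.1 ∈ e.source)]
      exact h2

/-- The graph of a cofinite monotone partial bijection of `ℕ`. -/
def Imon.graph (a : Imon) : Set (ℕ × ℕ) := a.1.graph

/-- The natural partial order on idempotents: `ε ≤ ι` iff `ε * ι = ι * ε = ε`. -/
def idemLE (ε ι : Imon) : Prop := ε * ι = ε ∧ ι * ε = ε

/-- The everywhere-defined partial bijection `n ↦ n + 1`. -/
def alphaPE : PartialEquiv ℕ ℕ where
  toFun n := n + 1
  invFun n := n - 1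
  source := Set.univ
  target := {n : ℕ | 1 ≤ n}
  map_source' n _ := Nat.le_add_left 1 n
  map_target' _ _ := trivial
  left_inv' n _ := by show n + 1 - 1 = n; omega
  right_inv' n hn := by
    simp only [Set.mem_setOf_eq] at hn
    show n - 1 + 1 = n
    omega

lemma alphaPE_good : IsCMPB alphaPE := by
  refine ⟨by simp [alphaPE], ?_, ?_⟩
  · apply (Set.finite_singleton 0).subset
    intro n hn
    simp only [alphaPE, mem_compl_iff, mem_setOf_eq, not_le] at hn
    simp only [mem_singleton_iff]
    omega
  · intro m n _ _ h
    show m + 1 < n + 1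
    omega

/-- The generator `α : n ↦ n + 1` of the bicyclic subsemigroup. -/
def aGen : Imon := ⟨⟦alphaPE⟧, alphaPE_good⟩

/-- The generator `β : n ↦ n - 1` (with source `{n | 1 ≤ n}`) of the bicyclic subsemigroup. -/
def bGen : Imon := aGen⁻¹

/-- The bicyclic subsemigroup `C_ℕ(α, β)` of `I∞↗(ℕ)`, generated by `α` and `β`. -/
def Cbic : Subsemigroup Imon := Subsemigroup.closure {aGen, bGen}


section IdemAux

lemma isCMPB_ofSet {A : Set ℕ} (hA : Aᶜ.Finite) : IsCMPB (PartialEquiv.ofSet A) :=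
  ⟨by simpa using hA, by simpa using hA, fun m n _ _ h => h⟩

/-- The idempotent of `Imon` given by the identity on a cofinite set `A`. -/
noncomputable def idem (A : Set ℕ) (hA : Aᶜ.Finite) : Imon :=
  ⟨⟦PartialEquiv.ofSet A⟧, isCMPB_ofSet hA⟩

lemma idem_eq_of {A B : Set ℕ} (hA : Aᶜ.Finite) (hB : Bᶜ.Finite) (h : A = B) :
    idem A hA = idem B hB := by subst h; rfl

lemma ofSet_trans_ofSet (A B : Set ℕ) :
    (PartialEquiv.ofSet A).trans (PartialEquiv.ofSet B) ≈ PartialEquiv.ofSet (A ∩ B) := by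
  constructor
  · simp [PartialEquiv.trans_source]
  · intro x hx
    rfl

lemma idem_mul {A B : Set ℕ} (hA : Aᶜ.Finite) (hB : Bᶜ.Finite) :
    idem A hA * idem B hB =
      idem (A ∩ B) (by rw [Set.compl_inter]; exact hA.union hB) := by
  apply Subtype.ext
  show (⟦PartialEquiv.ofSet A⟧ * ⟦PartialEquiv.ofSet B⟧ : PEQ) = ⟦PartialEquiv.ofSet (A ∩ B)⟧
  rw [PEQ.mk_mul]
  exact Quotient.sound (ofSet_trans_ofSet A B)

lemma idem_source {A : Set ℕ} (hA : Aᶜ.Finite) : (idem A hA).source = A := rfl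

lemma Imon.source_compl_finite (a : Imon) : a.sourceᶜ.Finite := by
  obtain ⟨q, h⟩ := a
  induction q using Quotient.inductionOn with | h e => exact h.1

lemma Imon.target_compl_finite (a : Imon) : a.targetᶜ.Finite := by
  obtain ⟨q, h⟩ := a
  induction q using Quotient.inductionOn with | h e => exact h.2.1

lemma idem_spec {x : Imon} (hx : x * x = x) :
    x = idem x.source x.source_compl_finite := by
  obtain ⟨q, h⟩ := x
  induction q using Quotient.inductionOn with | h e =>
  have hts : e.trans e ≈ e := Quotient.exact (congrArg Subtype.val hx)
  have hsrc : e.source ∩ e ⁻¹' e.source = e.source := by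
    have := PartialEquiv.EqOnSource.source_eq hts
    rwa [PartialEquiv.trans_source] at this
  have hmaps : ∀ z ∈ e.source, e z ∈ e.source := by
    intro z hz
    have : z ∈ e.source ∩ e ⁻¹' e.source := by rw [hsrc]; exact hz
    exact this.2
  have heq : ∀ z ∈ e.source, e z = z := by
    intro z hz
    have hz' : z ∈ (e.trans e).source := by rw [PartialEquiv.trans_source, hsrc]; exact hz
    have h2 : e (e z) = e z := PartialEquiv.EqOnSource.eqOn hts hz'
    exact e.injOn (hmaps z hz) hz h2
  apply Subtype.ext
  exact Quotient.sound ⟨rfl, fun z hz => heq z hz⟩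

lemma idem_source_inj {x y : Imon} (hx : x * x = x) (hy : y * y = y)
    (h : x.source = y.source) : x = y :=
  (idem_spec hx).trans ((idem_eq_of _ _ h).trans (idem_spec hy).symm)

lemma mul_idem {x y : Imon} (hx : x * x = x) (hy : y * y = y) :
    (x * y) * (x * y) = x * y ∧ (x * y).source = x.source ∩ y.source := by
  have h1 : x * y = idem (x.source ∩ y.source)
      (by rw [Set.compl_inter]; exact x.source_compl_finite.union y.source_compl_finite) := by
    conv_lhs => rw [idem_spec hx, idem_spec hy]
    rw [idem_mul]
  constructor
  · rw [h1, idem_mul]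
    exact idem_eq_of _ _ (Set.inter_self _)
  · rw [h1, idem_source]

lemma target_subset_of_mul_eq {x y : Imon} (h : x * y = x) : x.target ⊆ y.source := by
  obtain ⟨q, hq⟩ := x
  obtain ⟨r, hr⟩ := y
  induction q using Quotient.inductionOn with | h e =>
  induction r using Quotient.inductionOn with | h f =>
  have hts : e.trans f ≈ e := Quotient.exact (congrArg Subtype.val h)
  have hsrc : e.source ∩ e ⁻¹' f.source = e.source := by
    have := PartialEquiv.EqOnSource.source_eq hts
    rwa [PartialEquiv.trans_source] at this
  intro t ht
  have h1 : e.symm t ∈ e.source := e.map_target ht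
  have h2 : e (e.symm t) = t := e.right_inv ht
  have h3 : e.symm t ∈ e.source ∩ e ⁻¹' f.source := by rw [hsrc]; exact h1
  show t ∈ f.source
  rw [← h2]
  exact h3.2

end IdemAux

section TopAux

variable [TopologicalSpace Imon] [T2Space Imon] [LocallyCompactSpace Imon]
  [ContinuousMul Imon]

omit [TopologicalSpace Imon] [T2Space Imon] [LocallyCompactSpace Imon] [ContinuousMul Imon] in
/-- Finiteness of up-sets of idempotents. -/
lemma upset_finite {A : Set ℕ} (hA : Aᶜ.Finite) :
    {x : Imon | x * x = x ∧ A ⊆ x.source}.Finite := by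
  apply Set.Finite.of_finite_image (f := Imon.source)
  · apply Set.Finite.subset ((hA.finite_subsets).image (fun G => A ∪ G))
    rintro _ ⟨x, ⟨hx1, hx2⟩, rfl⟩
    exact ⟨x.source \ A, fun z hz => hz.2, Set.union_diff_cancel hx2⟩
  · intro x hx y hy h
    exact idem_source_inj hx.1 hy.1 h

lemma isolated_of_idem (ε : Imon) (hε : ε * ε = ε) :
    ∃ U : Set Imon, IsOpen U ∧ ε ∈ U ∧ ∀ x : Imon, x * x = x → x ∈ U → x = ε := by
  by_contra hcon
  push_neg at hcon
  -- `hcon : ∀ U, IsOpen U → ε ∈ U → ∃ x, x * x = x ∧ x ∈ U ∧ x ≠ ε`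
  set A : Set ℕ := ε.source with hAdef
  have hA : Aᶜ.Finite := ε.source_compl_finite
  -- Claim C : near ε there are idempotents below ε with fresh holes
  have claimC : ∀ U : Set Imon, IsOpen U → ε ∈ U → ∀ F : Set ℕ, F.Finite →
      ∃ (y : Imon) (n : ℕ), y * y = y ∧ y ∈ U ∧ y.source ⊆ A ∧
        n ∈ A ∧ n ∉ y.source ∧ n ∉ F := by
    intro U hU hεU F hF
    by_contra hno
    push_neg at hno
    set Y : Set Imon := {y : Imon | (y * y = y ∧ y ∈ U) ∧ y.source ⊆ A} with hYdef
    have hYfin : Y.Finite := by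
      apply Set.Finite.of_finite_image (f := Imon.source)
      · apply Set.Finite.subset (hF.finite_subsets.image (fun G => A \ G))
        rintro _ ⟨y, ⟨⟨hy1, hy2⟩, hy3⟩, rfl⟩
        refine ⟨A \ y.source, ?_, ?_⟩
        · intro n hn
          exact hno y n hy1 hy2 hy3 hn.1 hn.2
        · exact Set.diff_diff_cancel_left hy3
      · intro x hx y hy h
        exact idem_source_inj hx.1.1 hy.1.1 h
    have hρ : Continuous (fun x : Imon => x * ε) := continuous_id.mul continuous_const
    set V : Set Imon := (fun x : Imon => x * ε) ⁻¹' U with hVdef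
    set W : Set Imon :=
      V ∩ ((fun x : Imon => x * ε) ⁻¹' (Y \ {ε}))ᶜ ∩
        ({x : Imon | x * x = x ∧ A ⊆ x.source} \ {ε})ᶜ with hWdef
    have hWopen : IsOpen W := by
      apply IsOpen.inter
      · apply IsOpen.inter (hρ.isOpen_preimage U hU)
        exact (IsClosed.preimage hρ ((hYfin.diff).isClosed)).isOpen_compl
      · exact (((upset_finite hA).diff).isClosed).isOpen_compl
    have hεW : ε ∈ W := by
      refine ⟨⟨?_, ?_⟩, ?_⟩
      · show ε * ε ∈ U
        rw [hε]; exact hεU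
      · intro h
        have h' : ε * ε ∈ Y \ {ε} := h
        rw [hε] at h'
        exact h'.2 rfl
      · intro h
        exact h.2 rfl
    obtain ⟨x, hx1, hxW, hxne⟩ := hcon W hWopen hεW
    have hxεY : x * ε ∈ Y := by
      obtain ⟨hi, hs⟩ := mul_idem hx1 hε
      exact ⟨⟨hi, hxW.1.1⟩, by rw [hs]; exact Set.inter_subset_right⟩
    have hxε : x * ε = ε := by
      by_contra hne
      exact hxW.1.2 ⟨hxεY, hne⟩
    have hAx : A ⊆ x.source := by
      have hs := (mul_idem hx1 hε).2
      rw [hxε] at hs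
      intro n hn
      exact (hs ▸ hn : n ∈ x.source ∩ ε.source).1
    exact hxW.2 ⟨⟨hx1, hAx⟩, hxne⟩
  -- compact neighborhood
  obtain ⟨K, hKn, -, hKcomp⟩ := local_compact_nhds (x := ε) (n := Set.univ) Filter.univ_mem
  -- nested neighborhoods whose pairwise products fall into the previous one
  have step : ∀ W : Set Imon, IsOpen W → ε ∈ W →
      ∃ W', (IsOpen W' ∧ ε ∈ W') ∧ W' ⊆ W ∧ ∀ x ∈ W', ∀ y ∈ W', x * y ∈ W := by
    intro W hW hεW
    have hpre : IsOpen ((fun p : Imon × Imon => p.1 * p.2) ⁻¹' W) :=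
      hW.preimage continuous_mul
    obtain ⟨V₁, V₂, hV₁, hV₂, hε₁, hε₂, hsub⟩ :=
      isOpen_prod_iff.mp hpre ε ε (by show ε * ε ∈ W; rw [hε]; exact hεW)
    refine ⟨V₁ ∩ V₂ ∩ W, ⟨((hV₁.inter hV₂).inter hW), ⟨⟨hε₁, hε₂⟩, hεW⟩⟩,
      Set.inter_subset_right, ?_⟩
    intro x hx y hy
    exact hsub (Set.mk_mem_prod hx.1.1 hy.1.2)
  choose! f hf1 hf2 hf3 using step
  set U : ℕ → Set Imon := fun k => f^[k] (interior K) with hUdef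
  have hU0 : U 0 = interior K := rfl
  have hUS : ∀ k, U (k + 1) = f (U k) := fun k => Function.iterate_succ_apply' f k _
  have hUinv : ∀ k, IsOpen (U k) ∧ ε ∈ U k := by
    intro k
    induction k with
    | zero => exact ⟨isOpen_interior, mem_interior_iff_mem_nhds.mpr hKn⟩
    | succ k ih => rw [hUS]; exact hf1 (U k) ih.1 ih.2
  have hUsub : ∀ k, U (k + 1) ⊆ U k := by
    intro k
    rw [hUS]
    exact hf2 (U k) (hUinv k).1 (hUinv k).2
  have hUmul : ∀ k, ∀ x ∈ U (k + 1), ∀ y ∈ U (k + 1), x * y ∈ U k := by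
    intro k
    rw [hUS]
    exact hf3 (U k) (hUinv k).1 (hUinv k).2
  -- choose the y/n data
  have hCk : ∀ (k : ℕ) (F : Finset ℕ), ∃ (y : Imon) (n : ℕ), y * y = y ∧ y ∈ U (k + 1) ∧
      y.source ⊆ A ∧ n ∈ A ∧ n ∉ y.source ∧ n ∉ (F : Set ℕ) :=
    fun k F => claimC (U (k + 1)) (hUinv _).1 (hUinv _).2 F F.finite_toSet
  choose g₁ g₂ hg1 hg2 hg3 hg4 hg5 hg6 using hCk
  obtain ⟨seq, hseq0, hseqS⟩ :
      ∃ seq : ℕ → Finset ℕ × Imon × ℕ,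
        seq 0 = (∅, g₁ 0 ∅, g₂ 0 ∅) ∧
        ∀ k, seq (k + 1) =
          (insert (seq k).2.2 (seq k).1,
            g₁ (k + 1) (insert (seq k).2.2 (seq k).1),
            g₂ (k + 1) (insert (seq k).2.2 (seq k).1)) :=
    ⟨fun k => Nat.rec (∅, g₁ 0 ∅, g₂ 0 ∅)
      (fun k ih => (insert ih.2.2 ih.1, g₁ (k + 1) (insert ih.2.2 ih.1),
        g₂ (k + 1) (insert ih.2.2 ih.1))) k, rfl, fun k => rfl⟩
  obtain ⟨Fs, y, n, hFsy⟩ :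
      ∃ (Fs : ℕ → Finset ℕ) (y : ℕ → Imon) (n : ℕ → ℕ),
        ∀ k, Fs k = (seq k).1 ∧ y k = (seq k).2.1 ∧ n k = (seq k).2.2 :=
    ⟨fun k => (seq k).1, fun k => (seq k).2.1, fun k => (seq k).2.2,
      fun k => ⟨rfl, rfl, rfl⟩⟩
  have hykey : ∀ k, y k = g₁ k (Fs k) ∧ n k = g₂ k (Fs k) := by
    intro k
    obtain ⟨e1, e2, e3⟩ := hFsy k
    cases k with
    | zero => rw [e1, e2, e3, hseq0]; exact ⟨rfl, rfl⟩
    | succ k => rw [e1, e2, e3, hseqS k]; exact ⟨rfl, rfl⟩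
  have hFsS : ∀ k, Fs (k + 1) = insert (n k) (Fs k) := by
    intro k
    rw [(hFsy (k + 1)).1, (hFsy k).2.2, (hFsy k).1, hseqS k]
  have hy1 : ∀ k, y k * y k = y k := fun k => by rw [(hykey k).1]; exact hg1 _ _
  have hy2 : ∀ k, y k ∈ U (k + 1) := fun k => by rw [(hykey k).1]; exact hg2 _ _
  have hn5 : ∀ k, n k ∉ (y k).source := fun k => by
    rw [(hykey k).1, (hykey k).2]; exact hg5 _ _
  have hn6 : ∀ k, n k ∉ (Fs k : Set ℕ) := fun k => by
    rw [(hykey k).2]; exact hg6 _ _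
  have hmemFs : ∀ j k, j < k → n j ∈ Fs k := by
    intro j k
    induction k with
    | zero => omega
    | succ k ih =>
      intro hjk
      rw [hFsS k]
      rcases Nat.lt_succ_iff_lt_or_eq.mp hjk with h | h
      · exact Finset.mem_insert_of_mem (ih h)
      · subst h; exact Finset.mem_insert_self _ _
  have hninj : Function.Injective n := by
    intro j k hjk
    by_contra hne
    rcases Nat.lt_or_ge j k with h | h
    · exact hn6 k (by rw [← hjk]; exact_mod_cast hmemFs j k h)
    · have h' : k < j := by omega
      exact hn6 j (by rw [hjk]; exact_mod_cast hmemFs k j h')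
  -- partial products
  obtain ⟨s, hs0, hsS⟩ : ∃ s : ℕ → ℕ → Imon,
      (∀ j, s 0 j = y j) ∧ ∀ g j, s (g + 1) j = y j * s g (j + 1) :=
    ⟨fun g => Nat.rec (fun j => y j) (fun _ ih j => y j * ih (j + 1)) g,
      fun _ => rfl, fun _ _ => rfl⟩
  have hsidem : ∀ g j, s g j * s g j = s g j := by
    intro g
    induction g with
    | zero => intro j; rw [hs0]; exact hy1 j
    | succ g ih => intro j; rw [hsS]; exact (mul_idem (hy1 j) (ih (j + 1))).1
  have hssrc : ∀ g j, (s (g + 1) j).source = (y j).source ∩ (s g (j + 1)).source := by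
    intro g j
    rw [hsS]
    exact (mul_idem (hy1 j) (hsidem g (j + 1))).2
  have hsU : ∀ g j, s g j ∈ U j := by
    intro g
    induction g with
    | zero => intro j; rw [hs0]; exact hUsub j (hy2 j)
    | succ g ih =>
      intro j
      rw [hsS]
      exact hUmul j (y j) (hy2 j) (s g (j + 1)) (ih (j + 1))
  have hsy : ∀ g j i, j ≤ i → i ≤ j + g → (s g j).source ⊆ (y i).source := by
    intro g
    induction g with
    | zero =>
      intro j i h1 h2
      have : i = j := by omega
      subst this
      rw [hs0]
    | succ g ih =>
      intro j i h1 h2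
      rw [hssrc]
      rcases Nat.eq_or_lt_of_le h1 with h | h
      · subst h; exact Set.inter_subset_left
      · exact Set.inter_subset_right.trans (ih (j + 1) i h (by omega))
  have hanti : ∀ g j, (s (g + 1) j).source ⊆ (s g j).source := by
    intro g
    induction g with
    | zero =>
      intro j
      rw [hssrc 0 j, hs0 j]
      exact Set.inter_subset_left
    | succ g ih =>
      intro j
      rw [hssrc (g + 1) j, hssrc g j]
      exact Set.inter_subset_inter_right _ (ih (j + 1))
  have hmono : ∀ i k, i ≤ k → (s k 0).source ⊆ (s i 0).source := by
    intro i k hik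
    induction k with
    | zero =>
      have : i = 0 := by omega
      subst this; exact subset_rfl
    | succ k ih =>
      rcases Nat.lt_or_ge i (k + 1) with h | h
      · exact (hanti k 0).trans (ih (by omega))
      · have : i = k + 1 := by omega
        subst this; exact subset_rfl
  have hsmul : ∀ i k, i ≤ k → s k 0 * s i 0 = s k 0 := by
    intro i k hik
    apply idem_source_inj (mul_idem (hsidem k 0) (hsidem i 0)).1 (hsidem k 0)
    rw [(mul_idem (hsidem k 0) (hsidem i 0)).2]
    exact Set.inter_eq_left.mpr (hmono i k hik)
  -- the limit along an ultrafilter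
  set σ : ℕ → Imon := fun k => s k 0 with hσdef
  have hσK : ∀ k, σ k ∈ K := fun k => interior_subset (hsU k 0)
  set 𝒱 : Ultrafilter ℕ := Ultrafilter.of Filter.atTop with h𝒱def
  have h𝒱le : (𝒱 : Filter ℕ) ≤ Filter.atTop := Ultrafilter.of_le _
  have hmapK : (𝒱.map σ : Filter Imon) ≤ Filter.principal K := by
    rw [Filter.le_principal_iff]
    exact Filter.mem_map.mpr (Filter.univ_mem' hσK)
  obtain ⟨x, hxK, hxlim⟩ := hKcomp.ultrafilter_le_nhds (𝒱.map σ) hmapK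
  have htend : Filter.Tendsto σ (𝒱 : Filter ℕ) (nhds x) := by
    rw [Ultrafilter.coe_map] at hxlim
    exact hxlim
  have hxmul : ∀ i, x * σ i = x := by
    intro i
    have ht1 : Filter.Tendsto (fun k => σ k * σ i) (𝒱 : Filter ℕ) (nhds (x * σ i)) :=
      htend.mul tendsto_const_nhds
    have heq : (fun k => σ k * σ i) =ᶠ[(𝒱 : Filter ℕ)] σ := by
      apply Filter.Eventually.filter_mono h𝒱le
      filter_upwards [Filter.eventually_ge_atTop i] with k hk
      exact hsmul i k hk
    exact tendsto_nhds_unique (ht1.congr' heq) htend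
  have htgt : ∀ i, n i ∉ x.target := by
    intro i hmem
    have h1 : x.target ⊆ (σ i).source := target_subset_of_mul_eq (hxmul i)
    have h2 : (σ i).source ⊆ (y i).source := hsy i 0 i (Nat.zero_le _) (by omega)
    exact hn5 i (h2 (h1 hmem))
  have : (x.targetᶜ).Infinite :=
    Set.infinite_of_injective_forall_mem hninj htgt
  exact this x.target_compl_finite

end TopAux

/-- if `I∞↗(ℕ)` carries a locally compact Hausdorff topology with jointly
continuous multiplication, then its set of idempotents is discrete in the subspace
topology. -/
theorem Imon_locally_compact_idempotents_discrete
    [TopologicalSpace Imon] [T2Space Imon] [LocallyCompactSpace Imon]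
    [ContinuousMul Imon] :
    DiscreteTopology {ε : Imon // ε * ε = ε} := by
  rw [discreteTopology_iff_isOpen_singleton]
  rintro ⟨ε, hε⟩
  obtain ⟨U, hU, hεU, huniq⟩ := isolated_of_idem ε hε
  have hset : ({⟨ε, hε⟩} : Set {ε : Imon // ε * ε = ε}) = Subtype.val ⁻¹' U := by
    ext x
    constructor
    · rintro rfl
      exact hεU
    · intro hx
      have := huniq x.1 x.2 hx
      simp only [Set.mem_singleton_iff]
      exact Subtype.ext this
  rw [hset]
  exact hU.preimage continuous_subtype_val
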